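/- In the S-module N = S^2/U, the submodules sN, tN, and mN = (s,t)N all coincide, and this common submodule has length 1 as an S-module. -/

import Mathlib

set_option maxHeartbeats 1000000
set_option synthInstance.maxHeartbeats 400000

open CategoryTheory MvPolynomial

noncomputable section

/-- The ideal `(s², st, t²)` of the polynomial ring `K[s,t]`. -/
def sIdeal (K : Type) [Field K] : Ideal (MvPolynomial (Fin 2) K) :=
  Ideal.span {(X 0) ^ 2, (X 0) * (X 1), (X 1) ^ 2}

/-- The ring `S = K[s,t]/(s², st, t²)`. -/
abbrev Sring (K : Type) [Field K] : Type := MvPolynomial (Fin 2) K ⧸ sIdeal K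

/-- The image `s` of the first variable in `S`. -/
def sElt (K : Type) [Field K] : Sring K := Ideal.Quotient.mk _ (X 0)

/-- The image `t` of the second variable in `S`. -/
def tElt (K : Type) [Field K] : Sring K := Ideal.Quotient.mk _ (X 1)

/-- The submodule `U` of `S²` generated by `(t,0)`, `(0,s)` and `(s,t)`. -/
def Usub (K : Type) [Field K] : Submodule (Sring K) (Fin 2 → Sring K) :=
  Submodule.span _ {![tElt K, 0], ![0, sElt K], ![sElt K, tElt K]}

/-- The module `N = S²/U`. -/
abbrev Nmod (K : Type) [Field K] : Type := (Fin 2 → Sring K) ⧸ Usub K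

/-- The maximal ideal `m = (s,t)` of `S`. -/
def mIdeal (K : Type) [Field K] : Ideal (Sring K) := Ideal.span {sElt K, tElt K}

/-- The matrix `X̄` with rows `(s,0,t,0)` and `(0,s,0,t)`. -/
def Xbar (K : Type) [Field K] : Matrix (Fin 2) (Fin 4) (Sring K) :=
  !![sElt K, 0, tElt K, 0; 0, sElt K, 0, tElt K]

/-- The matrix `Ȳ = (sI₄ | tI₄)`. -/
def Ybar (K : Type) [Field K] : Matrix (Fin 4) (Fin 8) (Sring K) :=
  fun i j => if (j : ℕ) = (i : ℕ) then sElt K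
    else if (j : ℕ) = (i : ℕ) + 4 then tElt K else 0

/-- The `S`-linear map `v ↦ v A` on row vectors with entries in an `S`-module `M`,
for a matrix `A` over `S`. -/
def rowVecMulMap {S : Type} [CommRing S] {M : Type} [AddCommGroup M] [Module S M]
    {a b : ℕ} (A : Matrix (Fin a) (Fin b) S) : (Fin a → M) →ₗ[S] (Fin b → M) where
  toFun v := fun j => ∑ i, A i j • v i
  map_add' u v := by
    funext j
    simp [smul_add, Finset.sum_add_distrib]
  map_smul' c v := by
    funext j
    show (∑ i, A i j • (c • v) i) = c • ∑ i, A i j • v i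
    rw [Finset.smul_sum]
    refine Finset.sum_congr rfl fun i _ => ?_
    rw [Pi.smul_apply, smul_comm]

section Aux

variable (K : Type) [Field K]

lemma ss_zero : sElt K * sElt K = 0 := by
  rw [sElt, ← map_mul, Ideal.Quotient.eq_zero_iff_mem, ← pow_two]
  exact Ideal.subset_span (by simp [sIdeal])

lemma st_zero : sElt K * tElt K = 0 := by
  rw [sElt, tElt, ← map_mul, Ideal.Quotient.eq_zero_iff_mem]
  exact Ideal.subset_span (by simp [sIdeal])

lemma tt_zero : tElt K * tElt K = 0 := by
  rw [tElt, ← map_mul, Ideal.Quotient.eq_zero_iff_mem, ← pow_two]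
  exact Ideal.subset_span (by simp [sIdeal])

lemma ts_zero : tElt K * sElt K = 0 := by rw [mul_comm]; exact st_zero K

lemma s_mul_mem (x : Sring K) (hx : x ∈ mIdeal K) : sElt K * x = 0 := by
  induction hx using Submodule.span_induction with
  | mem y hy =>
    rcases hy with rfl | rfl
    · exact ss_zero K
    · exact st_zero K
  | zero => exact mul_zero _
  | add y z _ _ hy hz => rw [mul_add, hy, hz, add_zero]
  | smul c y _ hy => rw [smul_eq_mul, mul_left_comm, hy, mul_zero]

lemma t_mul_mem (x : Sring K) (hx : x ∈ mIdeal K) : tElt K * x = 0 := by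
  induction hx using Submodule.span_induction with
  | mem y hy =>
    rcases hy with rfl | rfl
    · exact ts_zero K
    · exact tt_zero K
  | zero => exact mul_zero _
  | add y z _ _ hy hz => rw [mul_add, hy, hz, add_zero]
  | smul c y _ hy => rw [smul_eq_mul, mul_left_comm, hy, mul_zero]

/-- The augmentation `S → K`. -/
def eAug : Sring K →ₐ[K] K :=
  Ideal.Quotient.liftₐ (sIdeal K) (aeval ![0, 0]) (by
    intro a ha
    have hle : sIdeal K ≤ RingHom.ker (aeval (R := K) (S₁ := K) ![0, 0]) := by
      rw [sIdeal, Ideal.span_le]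
      rintro x (rfl | rfl | rfl) <;> simp [SetLike.mem_coe, RingHom.mem_ker]
    exact RingHom.mem_ker.mp (hle ha))

@[simp] lemma eAug_mk (p : MvPolynomial (Fin 2) K) :
    eAug K (Ideal.Quotient.mk _ p) = aeval ![0, 0] p :=
  Ideal.Quotient.liftₐ_apply _ _ _ _

@[simp] lemma eAug_s : eAug K (sElt K) = 0 := by simp [sElt]

@[simp] lemma eAug_t : eAug K (tElt K) = 0 := by simp [tElt]

lemma mk_X_mem (i : Fin 2) : Ideal.Quotient.mk (sIdeal K) (X i) ∈ mIdeal K := by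
  fin_cases i
  · exact Ideal.subset_span (Or.inl rfl)
  · exact Ideal.subset_span (Or.inr rfl)

lemma sub_aug_mem (r : Sring K) : r - algebraMap K (Sring K) (eAug K r) ∈ mIdeal K := by
  obtain ⟨p, rfl⟩ := Ideal.Quotient.mk_surjective r
  induction p using MvPolynomial.induction_on with
  | C a =>
    have : (Ideal.Quotient.mk (sIdeal K)) (C a) = algebraMap K (Sring K) a := rfl
    rw [this, AlgHom.commutes]
    simp only [Algebra.algebraMap_self, RingHom.id_apply, sub_self]
    exact zero_mem _
  | add p q hp hq =>
    rw [map_add, map_add, map_add]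
    have := add_mem hp hq
    convert this using 1
    ring
  | mul_X p i hp =>
    rw [map_mul, map_mul]
    have h0 : eAug K (Ideal.Quotient.mk (sIdeal K) (X i)) = 0 := by
      rw [eAug_mk]; fin_cases i <;> simp
    rw [h0, mul_zero, map_zero, sub_zero]
    exact Ideal.mul_mem_left _ _ (mk_X_mem K i)

lemma s_mul_eq (r : Sring K) :
    sElt K * r = algebraMap K (Sring K) (eAug K r) * sElt K := by
  have h := s_mul_mem K _ (sub_aug_mem K r)
  rw [mul_sub] at h
  rw [sub_eq_zero] at h
  rw [h, mul_comm]

lemma t_mul_eq (r : Sring K) :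
    tElt K * r = algebraMap K (Sring K) (eAug K r) * tElt K := by
  have h := t_mul_mem K _ (sub_aug_mem K r)
  rw [mul_sub, sub_eq_zero] at h
  rw [h, mul_comm]

/-- Representation `S → K[ε]`, `s ↦ ε`, `t ↦ 0`. -/
def fS : Sring K →ₐ[K] DualNumber K :=
  Ideal.Quotient.liftₐ (sIdeal K) (aeval ![DualNumber.eps, 0]) (by
    intro a ha
    have hle : sIdeal K ≤
        RingHom.ker (aeval (R := K) (S₁ := DualNumber K) ![DualNumber.eps, 0]) := by
      rw [sIdeal, Ideal.span_le]
      rintro x (rfl | rfl | rfl) <;>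
        simp [SetLike.mem_coe, RingHom.mem_ker, pow_two, DualNumber.eps_mul_eps]
    exact RingHom.mem_ker.mp (hle ha))

/-- Representation `S → K[ε]`, `s ↦ 0`, `t ↦ ε`. -/
def fT : Sring K →ₐ[K] DualNumber K :=
  Ideal.Quotient.liftₐ (sIdeal K) (aeval ![0, DualNumber.eps]) (by
    intro a ha
    have hle : sIdeal K ≤
        RingHom.ker (aeval (R := K) (S₁ := DualNumber K) ![0, DualNumber.eps]) := by
      rw [sIdeal, Ideal.span_le]
      rintro x (rfl | rfl | rfl) <;>
        simp [SetLike.mem_coe, RingHom.mem_ker, pow_two, DualNumber.eps_mul_eps]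
    exact RingHom.mem_ker.mp (hle ha))

@[simp] lemma fS_s : fS K (sElt K) = DualNumber.eps := by
  rw [fS, sElt, Ideal.Quotient.liftₐ_apply, ]
  erw [Ideal.Quotient.lift_mk]
  simp

@[simp] lemma fS_t : fS K (tElt K) = 0 := by
  rw [fS, tElt, Ideal.Quotient.liftₐ_apply, ]
  erw [Ideal.Quotient.lift_mk]
  simp

@[simp] lemma fT_s : fT K (sElt K) = 0 := by
  rw [fT, sElt, Ideal.Quotient.liftₐ_apply, ]
  erw [Ideal.Quotient.lift_mk]
  simp

@[simp] lemma fT_t : fT K (tElt K) = DualNumber.eps := by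
  rw [fT, tElt, Ideal.Quotient.liftₐ_apply, ]
  erw [Ideal.Quotient.lift_mk]
  simp

lemma fst_fS (r : Sring K) : (fS K r).fst = eAug K r := by
  obtain ⟨p, rfl⟩ := Ideal.Quotient.mk_surjective r
  rw [fS, Ideal.Quotient.liftₐ_apply]
  erw [Ideal.Quotient.lift_mk]
  rw [eAug_mk]
  have : (TrivSqZeroExt.fstHom K K K).comp (aeval ![DualNumber.eps, 0])
      = (aeval ![0, 0] : MvPolynomial (Fin 2) K →ₐ[K] K) := by
    rw [MvPolynomial.comp_aeval]
    congr 1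
    funext i
    fin_cases i <;> simp [DualNumber.fst_eps]
  exact congrArg (fun f => f p) this ▸ rfl

lemma fst_fT (r : Sring K) : (fT K r).fst = eAug K r := by
  obtain ⟨p, rfl⟩ := Ideal.Quotient.mk_surjective r
  rw [fT, Ideal.Quotient.liftₐ_apply]
  erw [Ideal.Quotient.lift_mk]
  rw [eAug_mk]
  have : (TrivSqZeroExt.fstHom K K K).comp (aeval ![0, DualNumber.eps])
      = (aeval ![0, 0] : MvPolynomial (Fin 2) K →ₐ[K] K) := by
    rw [MvPolynomial.comp_aeval]
    congr 1
    funext i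
    fin_cases i <;> simp [DualNumber.fst_eps]
  exact congrArg (fun f => f p) this ▸ rfl

lemma nonmem : ![sElt K, 0] ∉ Usub K := by
  intro h
  rw [Usub, Submodule.mem_span_insert] at h
  obtain ⟨a, z, hz, hx⟩ := h
  rw [Submodule.mem_span_insert] at hz
  obtain ⟨b, w, hw, rfl⟩ := hz
  rw [Submodule.mem_span_singleton] at hw
  obtain ⟨c, rfl⟩ := hw
  have h0 := congr_fun hx 0
  have h1 := congr_fun hx 1
  simp only [Pi.add_apply, Pi.smul_apply, Matrix.cons_val_zero, Matrix.cons_val_one,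
    Matrix.head_cons, smul_eq_mul, mul_zero, add_zero, zero_add] at h0 h1
  -- h0 : sElt K = a * tElt K + c * sElt K
  -- h1 : 0 = b * sElt K + c * tElt K
  have e0 := congrArg (fS K) h0
  have e1 := congrArg (fT K) h1
  simp only [map_add, map_mul, fS_s, fS_t, fT_s, fT_t, mul_zero, zero_add, add_zero,
    map_zero] at e0 e1
  -- e0 : ε = fS c * ε,  e1 : 0 = fT c * ε
  have c1 : (1 : K) = eAug K c := by
    have := congrArg TrivSqZeroExt.snd e0
    rwa [DualNumber.snd_eps, DualNumber.snd_mul, DualNumber.snd_eps, DualNumber.fst_eps,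
      mul_one, mul_zero, add_zero, fst_fS] at this
  have c0 : (0 : K) = eAug K c := by
    have := congrArg TrivSqZeroExt.snd e1
    rwa [TrivSqZeroExt.snd_zero, DualNumber.snd_mul, DualNumber.snd_eps, DualNumber.fst_eps,
      mul_one, mul_zero, add_zero, fst_fT] at this
  exact one_ne_zero (c1.trans c0.symm)

/-- The generator of `mN`. -/
def n0 : Nmod K := Submodule.Quotient.mk ![sElt K, 0]

lemma n0_ne : n0 K ≠ 0 := by
  rw [n0, ne_eq, Submodule.Quotient.mk_eq_zero]
  exact nonmem K

lemma mk0t_eq : (Submodule.Quotient.mk ![0, tElt K] : Nmod K) = - n0 K := by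
  have h3 : (Submodule.Quotient.mk ![sElt K, tElt K] : Nmod K) = 0 :=
    (Submodule.Quotient.mk_eq_zero _).2 <| Submodule.subset_span (by simp)
  have : (![sElt K, tElt K] : Fin 2 → Sring K) = ![sElt K, 0] + ![0, tElt K] := by
    funext i; fin_cases i <;> simp
  rw [this, Submodule.Quotient.mk_add] at h3
  rw [eq_neg_iff_add_eq_zero, n0, add_comm]
  exact h3

lemma mk0s_eq : (Submodule.Quotient.mk ![0, sElt K] : Nmod K) = 0 :=
  (Submodule.Quotient.mk_eq_zero _).2 <| Submodule.subset_span (by simp)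

lemma mkt0_eq : (Submodule.Quotient.mk ![tElt K, 0] : Nmod K) = 0 :=
  (Submodule.Quotient.mk_eq_zero _).2 <| Submodule.subset_span (by simp)

lemma s_smul_mem (n : Nmod K) : sElt K • n ∈ Submodule.span (Sring K) {n0 K} := by
  obtain ⟨v, rfl⟩ := Submodule.Quotient.mk_surjective _ n
  rw [← Submodule.Quotient.mk_smul]
  have : sElt K • v = (algebraMap K (Sring K) (eAug K (v 0))) • ![sElt K, 0]
      + (algebraMap K (Sring K) (eAug K (v 1))) • ![0, sElt K] := by
    funext i
    fin_cases i
    · show sElt K * v 0 = _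
      simp only [Fin.mk_zero, Pi.add_apply, Pi.smul_apply, Matrix.cons_val_zero, smul_eq_mul,
        mul_zero, add_zero]
      exact s_mul_eq K (v 0)
    · show sElt K * v 1 = _
      simp only [Fin.mk_one, Pi.add_apply, Pi.smul_apply, Matrix.cons_val_one, Matrix.head_cons,
        smul_eq_mul, mul_zero, zero_add, Matrix.cons_val_zero]
      exact s_mul_eq K (v 1)
  rw [this, Submodule.Quotient.mk_add, Submodule.Quotient.mk_smul,
    Submodule.Quotient.mk_smul, mk0s_eq, smul_zero, add_zero]
  exact Submodule.smul_mem _ _ (Submodule.mem_span_singleton_self _)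

lemma t_smul_mem (n : Nmod K) : tElt K • n ∈ Submodule.span (Sring K) {n0 K} := by
  obtain ⟨v, rfl⟩ := Submodule.Quotient.mk_surjective _ n
  rw [← Submodule.Quotient.mk_smul]
  have : tElt K • v = (algebraMap K (Sring K) (eAug K (v 0))) • ![tElt K, 0]
      + (algebraMap K (Sring K) (eAug K (v 1))) • ![0, tElt K] := by
    funext i
    fin_cases i
    · show tElt K * v 0 = _
      simp only [Fin.mk_zero, Pi.add_apply, Pi.smul_apply, Matrix.cons_val_zero, smul_eq_mul,
        mul_zero, add_zero]
      exact t_mul_eq K (v 0)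
    · show tElt K * v 1 = _
      simp only [Fin.mk_one, Pi.add_apply, Pi.smul_apply, Matrix.cons_val_one, Matrix.head_cons,
        smul_eq_mul, mul_zero, zero_add, Matrix.cons_val_zero]
      exact t_mul_eq K (v 1)
  rw [this, Submodule.Quotient.mk_add, Submodule.Quotient.mk_smul,
    Submodule.Quotient.mk_smul, mkt0_eq, smul_zero, zero_add, mk0t_eq]
  exact Submodule.smul_mem _ _ (Submodule.neg_mem _ (Submodule.mem_span_singleton_self _))

lemma L1 : (Ideal.span {sElt K}) • (⊤ : Submodule (Sring K) (Nmod K)) =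
    Submodule.span (Sring K) {n0 K} := by
  apply le_antisymm
  · rw [Submodule.smul_le]
    intro r hr n _
    rw [Ideal.mem_span_singleton] at hr
    obtain ⟨c, rfl⟩ := hr
    rw [mul_comm, mul_smul]
    exact Submodule.smul_mem _ _ (s_smul_mem K n)
  · rw [Submodule.span_le, Set.singleton_subset_iff]
    have : n0 K = sElt K • (Submodule.Quotient.mk ![1, 0] : Nmod K) := by
      rw [← Submodule.Quotient.mk_smul, n0]
      congr 1
      funext i; fin_cases i <;> simp
    rw [this]
    exact Submodule.smul_mem_smul (Ideal.mem_span_singleton_self _) trivial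

lemma L2 : (Ideal.span {tElt K}) • (⊤ : Submodule (Sring K) (Nmod K)) =
    Submodule.span (Sring K) {n0 K} := by
  apply le_antisymm
  · rw [Submodule.smul_le]
    intro r hr n _
    rw [Ideal.mem_span_singleton] at hr
    obtain ⟨c, rfl⟩ := hr
    rw [mul_comm, mul_smul]
    exact Submodule.smul_mem _ _ (t_smul_mem K n)
  · rw [Submodule.span_le, Set.singleton_subset_iff]
    have h : (Submodule.Quotient.mk ![0, tElt K] : Nmod K)
        ∈ (Ideal.span {tElt K}) • (⊤ : Submodule (Sring K) (Nmod K)) := by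
      have : (Submodule.Quotient.mk ![0, tElt K] : Nmod K)
          = tElt K • (Submodule.Quotient.mk ![0, 1] : Nmod K) := by
        rw [← Submodule.Quotient.mk_smul]
        congr 1
        funext i; fin_cases i <;> simp
      rw [this]
      exact Submodule.smul_mem_smul (Ideal.mem_span_singleton_self _) trivial
    have h2 := Submodule.neg_mem _ h
    rwa [mk0t_eq, neg_neg] at h2

lemma L3 : mIdeal K • (⊤ : Submodule (Sring K) (Nmod K)) =
    Submodule.span (Sring K) {n0 K} := by
  have : mIdeal K = Ideal.span {sElt K} ⊔ Ideal.span {tElt K} := by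
    rw [mIdeal, Ideal.span_insert]
  rw [this, Submodule.sup_smul, L1, L2, sup_idem]

lemma eAug_surj : Function.Surjective (eAug K) :=
  fun c => ⟨algebraMap K _ c, (eAug K).commutes c⟩

lemma m_eq_ker : mIdeal K = RingHom.ker (eAug K) := by
  apply le_antisymm
  · rw [mIdeal, Ideal.span_le]
    rintro x (rfl | rfl) <;> simp [SetLike.mem_coe, RingHom.mem_ker]
  · intro r hr
    rw [RingHom.mem_ker] at hr
    have := sub_aug_mem K r
    rwa [hr, map_zero, sub_zero] at this

lemma m_max : (mIdeal K).IsMaximal := by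
  rw [m_eq_ker]
  exact RingHom.ker_isMaximal_of_surjective _ (eAug_surj K)

lemma ker_toSpan : LinearMap.ker (LinearMap.toSpanSingleton (Sring K) (Nmod K) (n0 K))
    = mIdeal K := by
  have hle : mIdeal K ≤ LinearMap.ker (LinearMap.toSpanSingleton (Sring K) (Nmod K) (n0 K)) := by
    rw [mIdeal, Ideal.span_le]
    rintro x (rfl | rfl) <;>
    · rw [SetLike.mem_coe, LinearMap.mem_ker, LinearMap.toSpanSingleton_apply, n0,
        ← Submodule.Quotient.mk_smul]
      rw [show (0 : Nmod K) = Submodule.Quotient.mk 0 from rfl]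
      congr 1
      funext i
      fin_cases i <;> simp [ss_zero, ts_zero]
  have hne : LinearMap.ker (LinearMap.toSpanSingleton (Sring K) (Nmod K) (n0 K)) ≠ ⊤ := by
    intro h
    apply n0_ne K
    have : (1 : Sring K) ∈ LinearMap.ker (LinearMap.toSpanSingleton (Sring K) (Nmod K) (n0 K)) :=
      h ▸ trivial
    simpa using this
  exact ((m_max K).eq_of_le hne hle).symm

end Aux

/-- In `N = S²/U` the submodules `sN`, `tN` and `mN = (s,t)N` coincide, and this common
submodule has length 1 (it admits a composition series of length 1 from `⊥` to `⊤`). -/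
theorem stmt_7 (K : Type) [Field K] :
    (Ideal.span {sElt K}) • (⊤ : Submodule (Sring K) (Nmod K)) =
        (Ideal.span {tElt K}) • (⊤ : Submodule (Sring K) (Nmod K)) ∧
    (Ideal.span {tElt K}) • (⊤ : Submodule (Sring K) (Nmod K)) =
        mIdeal K • (⊤ : Submodule (Sring K) (Nmod K)) ∧
    ∃ c : CompositionSeries
        (Submodule (Sring K) ↥(mIdeal K • (⊤ : Submodule (Sring K) (Nmod K)))),
      c.head = ⊥ ∧ c.last = ⊤ ∧ c.length = 1 := by
  refine ⟨(L1 K).trans (L2 K).symm, (L2 K).trans (L3 K).symm, ?_⟩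
  have hsimple : IsSimpleModule (Sring K)
      ↥(mIdeal K • (⊤ : Submodule (Sring K) (Nmod K))) := by
    have e1 : ↥(mIdeal K • (⊤ : Submodule (Sring K) (Nmod K)))
        ≃ₗ[Sring K] ↥(Submodule.span (Sring K) {n0 K}) :=
      LinearEquiv.ofEq _ _ (L3 K)
    have e2 : ↥(Submodule.span (Sring K) {n0 K}) ≃ₗ[Sring K]
        ↥(LinearMap.range (LinearMap.toSpanSingleton (Sring K) (Nmod K) (n0 K))) :=
      LinearEquiv.ofEq _ _ (LinearMap.span_singleton_eq_range _ _ _)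
    have e3 := (LinearMap.quotKerEquivRange
      (LinearMap.toSpanSingleton (Sring K) (Nmod K) (n0 K))).symm
    have e4 : (Sring K ⧸ LinearMap.ker (LinearMap.toSpanSingleton (Sring K) (Nmod K) (n0 K)))
        ≃ₗ[Sring K] (Sring K ⧸ mIdeal K) :=
      Submodule.quotEquivOfEq _ _ (ker_toSpan K)
    exact isSimpleModule_iff_quot_maximal.mpr
      ⟨mIdeal K, m_max K, ⟨((e1.trans e2).trans e3).trans e4⟩⟩
  refine ⟨⟨1, ![⊥, ⊤], ?_⟩, ?_, ?_, rfl⟩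
  · intro i
    fin_cases i
    have h : (⊥ : Submodule (Sring K)
        ↥(mIdeal K • (⊤ : Submodule (Sring K) (Nmod K)))) ⋖ ⊤ := bot_covBy_top
    exact h
  · show (![⊥, ⊤] : Fin 2 → Submodule (Sring K) _) 0 = ⊥
    simp
  · show (![⊥, ⊤] : Fin 2 → Submodule (Sring K) _) (Fin.last 1) = ⊤
    simp [Fin.last]

end
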